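/- Let A be a bounded normal operator on a complex Hilbert space H (i.e., A*A = AA*), let (x_i)_{i∈I} be a family of vectors in H, and suppose that the family (A^k x_i)_{i∈I, k∈ℕ} is a Bessel sequence in H and that its closed linear span equals H. Then the spectrum of A is contained in the closed unit disc {z ∈ ℂ : |z| ≤ 1}. -/

import Mathlib

open MeasureTheory ContinuousLinearMap

theorem stmt_14 {H : Type*} [NormedAddCommGroup H] [InnerProductSpace ℂ H] [CompleteSpace H]
    {ι : Type*} (A : H →L[ℂ] H)
    (hA : ContinuousLinearMap.adjoint A ∘L A = A ∘L ContinuousLinearMap.adjoint A)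
    (x : ι → H)
    (hBessel : ∃ C > 0, ∀ v : H, ∀ F : Finset (ι × ℕ),
        ∑ p ∈ F, ‖(inner ℂ v ((A ^ p.2) (x p.1)) : ℂ)‖ ^ 2 ≤ C * ‖v‖ ^ 2)
    (hcomplete :
        (Submodule.span ℂ (Set.range fun p : ι × ℕ => (A ^ p.2) (x p.1))).topologicalClosure
          = ⊤) :
    spectrum ℂ A ⊆ Metric.closedBall (0 : ℂ) 1 := by
  obtain ⟨C, hC, hB⟩ := hBessel
  have hN : IsStarNormal A :=
    ⟨by rw [commute_iff_eq, ContinuousLinearMap.star_eq_adjoint]; exact hA⟩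
  intro lam hlam
  by_contra hball
  have hR1 : 1 < ‖lam‖ := by
    simp only [Metric.mem_closedBall, dist_zero_right, not_le] at hball
    exact hball
  set R : ℝ := ‖lam‖ with hRdef
  set r : ℝ := (1 + R) / 2 with hrdef
  have hr1 : 1 < r := by rw [hrdef]; linarith
  have hrR : r < R := by rw [hrdef]; linarith
  have hr0 : (0:ℝ) < r := by linarith
  -- the bump function
  set f : ℂ → ℂ := fun z => ((min 1 (max 0 ((‖z‖ - r) / (R - r))) : ℝ) : ℂ) with hfdef
  have hfcont : Continuous f :=
    Complex.continuous_ofReal.comp <|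
      continuous_const.min <| continuous_const.max <|
        (continuous_norm.sub continuous_const).div_const _
  have hf0 : ∀ z : ℂ, ‖z‖ ≤ r → f z = 0 := by
    intro z hz
    have h1 : (‖z‖ - r) / (R - r) ≤ 0 :=
      div_nonpos_of_nonpos_of_nonneg (by linarith) (by linarith)
    simp only [hfdef, max_eq_left h1, min_eq_right (zero_le_one' ℝ), Complex.ofReal_zero]
  have hfbd : ∀ z : ℂ, ‖f z‖ ≤ 1 := by
    intro z
    rw [hfdef]
    simp only [Complex.norm_real]
    rw [Real.norm_eq_abs, abs_le]
    constructor
    · have : (0:ℝ) ≤ min 1 (max 0 ((‖z‖ - r) / (R - r))) :=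
        le_min zero_le_one (le_max_left _ _)
      linarith
    · exact min_le_left _ _
  have hflam : f lam = 1 := by
    have : (‖lam‖ - r) / (R - r) = 1 := by
      rw [← hRdef]; exact div_self (by linarith)
    rw [hfdef]
    simp only
    rw [this, max_eq_right zero_le_one, min_self, Complex.ofReal_one]
  -- the auxiliary functions
  set q : ℕ → ℂ → ℂ := fun k z => ((star z)⁻¹) ^ k * f z with hqdef
  have hqcont : ∀ k, Continuous (q k) := by
    intro k
    rw [continuous_iff_continuousAt]
    intro z
    by_cases hz : z = 0
    · subst hz
      apply Filter.EventuallyEq.continuousAt (y := (0:ℂ))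
      filter_upwards [Metric.ball_mem_nhds (0:ℂ) hr0] with w hw
      simp only [mem_ball_zero_iff] at hw
      show (star w)⁻¹ ^ k * f w = 0
      rw [hf0 w hw.le, mul_zero]
    · exact (((continuous_star.continuousAt).inv₀
        (star_ne_zero.mpr hz)).pow k).mul hfcont.continuousAt
  have hq : ∀ k : ℕ, (star A) ^ k * cfc (q k) A = cfc f A := by
    intro k
    have h1 : cfc (fun z : ℂ => (star z) ^ k * q k z) A
        = cfc (fun z : ℂ => (star z) ^ k) A * cfc (q k) A :=
      cfc_mul _ _ A (Continuous.continuousOn (by fun_prop)) (hqcont k).continuousOn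
    have h2 : cfc (fun z : ℂ => (star z) ^ k) A = (star A) ^ k := by
      rw [cfc_pow (R := ℂ) (fun z => star z) k (a := A), cfc_star_id (a := A) (R := ℂ)]
    have h3 : cfc (fun z : ℂ => (star z) ^ k * q k z) A = cfc f A := by
      apply cfc_congr
      intro z _
      show star z ^ k * ((star z)⁻¹ ^ k * f z) = f z
      by_cases hz : z = 0
      · subst hz
        rw [hf0 0 (by simpa using hr0.le), mul_zero, mul_zero]
      · rw [← mul_assoc, ← mul_pow, mul_inv_cancel₀ (star_ne_zero.mpr hz), one_pow, one_mul]
    rw [← h2, ← h1]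
    exact h3
  have hqnorm : ∀ k : ℕ, ‖cfc (q k) A‖ ≤ r⁻¹ ^ k := by
    intro k
    refine norm_cfc_le (by positivity) fun z _ => ?_
    show ‖(star z)⁻¹ ^ k * f z‖ ≤ r⁻¹ ^ k
    by_cases hz : ‖z‖ ≤ r
    · rw [hf0 z hz, mul_zero, norm_zero]
      positivity
    · push_neg at hz
      rw [norm_mul, norm_pow, norm_inv, norm_star]
      calc ‖z‖⁻¹ ^ k * ‖f z‖ ≤ ‖z‖⁻¹ ^ k * 1 := by
            apply mul_le_mul_of_nonneg_left (hfbd z) (by positivity)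
        _ = ‖z‖⁻¹ ^ k := mul_one _
        _ ≤ r⁻¹ ^ k := by
            apply pow_le_pow_left₀ (by positivity)
            exact inv_anti₀ hr0 hz.le
  -- the projection-like operator
  set P : H →L[ℂ] H := cfc f A with hPdef
  have h1P : (1:ℂ) ∈ spectrum ℂ P := by
    rw [hPdef, cfc_map_spectrum f A (hf := hfcont.continuousOn)]
    exact ⟨lam, hlam, hflam⟩
  -- P kills everything
  have hkey : ∀ (u : H) (i : ι) (m : ℕ), (inner ℂ (P u) ((A ^ m) (x i)) : ℂ) = 0 := by
    intro u i m
    have hub : ∀ k : ℕ, ‖(inner ℂ (P u) ((A ^ m) (x i)) : ℂ)‖ ^ 2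
        ≤ (C * ‖u‖ ^ 2) * (r⁻¹ ^ 2) ^ k := by
      intro k
      have e1 : P u = ((star A) ^ k) ((cfc (q k) A) u) := by
        rw [← hq k, ContinuousLinearMap.mul_apply]
      have e2 : (inner ℂ (P u) ((A ^ m) (x i)) : ℂ)
          = inner ℂ ((cfc (q k) A) u) ((A ^ (k + m)) (x i)) := by
        rw [e1, ← star_pow, ContinuousLinearMap.star_eq_adjoint,
          ContinuousLinearMap.adjoint_inner_left, pow_add, ContinuousLinearMap.mul_apply]
      have e3 := hB ((cfc (q k) A) u) {(i, k + m)}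
      rw [Finset.sum_singleton] at e3
      have e4 : ‖(cfc (q k) A) u‖ ≤ r⁻¹ ^ k * ‖u‖ := by
        calc ‖(cfc (q k) A) u‖ ≤ ‖cfc (q k) A‖ * ‖u‖ := le_opNorm _ _
          _ ≤ r⁻¹ ^ k * ‖u‖ := by
              apply mul_le_mul_of_nonneg_right (hqnorm k) (norm_nonneg _)
      calc ‖(inner ℂ (P u) ((A ^ m) (x i)) : ℂ)‖ ^ 2
          = ‖(inner ℂ ((cfc (q k) A) u) ((A ^ (k + m)) (x i)) : ℂ)‖ ^ 2 := by rw [e2]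
        _ ≤ C * ‖(cfc (q k) A) u‖ ^ 2 := e3
        _ ≤ C * (r⁻¹ ^ k * ‖u‖) ^ 2 := by
            apply mul_le_mul_of_nonneg_left _ hC.le
            exact pow_le_pow_left₀ (norm_nonneg _) e4 2
        _ = (C * ‖u‖ ^ 2) * (r⁻¹ ^ 2) ^ k := by ring
    have hlim : Filter.Tendsto (fun k : ℕ => (C * ‖u‖ ^ 2) * (r⁻¹ ^ 2) ^ k)
        Filter.atTop (nhds 0) := by
      rw [show (0:ℝ) = (C * ‖u‖ ^ 2) * 0 by ring]
      apply Filter.Tendsto.const_mul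
      apply tendsto_pow_atTop_nhds_zero_of_lt_one (by positivity)
      have : r⁻¹ < 1 := inv_lt_one_of_one_lt₀ hr1
      nlinarith [inv_pos.mpr hr0]
    have : ‖(inner ℂ (P u) ((A ^ m) (x i)) : ℂ)‖ ^ 2 ≤ 0 := ge_of_tendsto' hlim hub
    have h0 : ‖(inner ℂ (P u) ((A ^ m) (x i)) : ℂ)‖ = 0 := by nlinarith [norm_nonneg (inner ℂ (P u) ((A ^ m) (x i)) : ℂ)]
    exact norm_eq_zero.mp h0
  have hPzero : ∀ u : H, P u = 0 := by
    intro u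
    have hmem : P u ∈ (Submodule.span ℂ
        (Set.range fun p : ι × ℕ => (A ^ p.2) (x p.1)))ᗮ := by
      rw [Submodule.mem_orthogonal]
      intro y hy
      induction hy using Submodule.span_induction with
      | mem y hy =>
        obtain ⟨p, rfl⟩ := hy
        rw [← inner_eq_zero_symm]
        exact hkey u p.1 p.2
      | zero => exact inner_zero_left _
      | add a b _ _ ha hb => rw [inner_add_left, ha, hb, add_zero]
      | smul c a _ ha => rw [inner_smul_left, ha, mul_zero]
    rw [Submodule.topologicalClosure_eq_top_iff] at hcomplete
    rw [hcomplete] at hmem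
    simpa using hmem
  have hP0 : P = 0 := ContinuousLinearMap.ext fun u => by rw [hPzero u]; rfl
  rw [hP0] at h1P
  rw [spectrum.mem_iff] at h1P
  apply h1P
  simp
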